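/- EUCS-based 2-itemset pruning is sound: for any itemset Y containing two items y, z with RTWU({y,z}) < minUtil, Y is not a high-utility itemset (u(Y) < minUtil). -/
import Mathlib


open Finset

def utilT {α ι : Type} (pr : α → ℤ) (q : α → ι → ℕ) (X : Finset α) (t : ι) : ℤ :=
  ∑ i ∈ X, pr i * (q i t : ℤ)

def totU {α ι : Type} [DecidableEq α] (D : Finset ι) (Trans : ι → Finset α)
    (pr : α → ℤ) (q : α → ι → ℕ) (X : Finset α) : ℤ :=
  ∑ t ∈ D.filter (fun t => X ⊆ Trans t), utilT pr q X t

def RTU {α ι : Type} [DecidableEq α] (Trans : ι → Finset α)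
    (pr : α → ℤ) (q : α → ι → ℕ) (t : ι) : ℤ :=
  ∑ i ∈ (Trans t).filter (fun i => 0 < pr i), pr i * (q i t : ℤ)

def RTWU {α ι : Type} [DecidableEq α] (D : Finset ι) (Trans : ι → Finset α)
    (pr : α → ℤ) (q : α → ι → ℕ) (X : Finset α) : ℤ :=
  ∑ t ∈ D.filter (fun t => X ⊆ Trans t), RTU Trans pr q t

lemma RTU_nonneg {α ι : Type} [DecidableEq α] (Trans : ι → Finset α)
    (pr : α → ℤ) (q : α → ι → ℕ) (t : ι) : 0 ≤ RTU Trans pr q t := by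
  apply Finset.sum_nonneg
  intro i hi
  simp only [Finset.mem_filter] at hi
  exact mul_nonneg hi.2.le (by positivity)

lemma utilT_le_RTU {α ι : Type} [DecidableEq α] (Trans : ι → Finset α)
    (pr : α → ℤ) (q : α → ι → ℕ) (Y : Finset α) (t : ι) (hY : Y ⊆ Trans t) :
    utilT pr q Y t ≤ RTU Trans pr q t := by
  have h1 : utilT pr q Y t ≤ ∑ i ∈ Y.filter (fun i => 0 < pr i), pr i * (q i t : ℤ) := by
    unfold utilT
    rw [← Finset.sum_filter_add_sum_filter_not Y (fun i => 0 < pr i)]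
    have : ∑ i ∈ Y.filter (fun i => ¬ 0 < pr i), pr i * (q i t : ℤ) ≤ 0 := by
      apply Finset.sum_nonpos
      intro i hi
      simp only [Finset.mem_filter, not_lt] at hi
      exact mul_nonpos_of_nonpos_of_nonneg hi.2 (by positivity)
    linarith
  refine h1.trans (Finset.sum_le_sum_of_subset_of_nonneg ?_ ?_)
  · exact Finset.filter_subset_filter _ hY
  · intro i hi _
    simp only [Finset.mem_filter] at hi
    exact mul_nonneg hi.2.le (by positivity)

theorem stmt11 {α ι : Type} [DecidableEq α] (D : Finset ι) (Trans : ι → Finset α)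
    (pr : α → ℤ) (q : α → ι → ℕ) (hq : ∀ i t, 0 < q i t)
    (minUtil : ℤ) (y z : α) (hyz : y ≠ z)
    (h : RTWU D Trans pr q {y, z} < minUtil) :
    ∀ Y : Finset α, {y, z} ⊆ Y → totU D Trans pr q Y < minUtil := by
  intro Y hYZ
  have h1 : totU D Trans pr q Y ≤ ∑ t ∈ D.filter (fun t => Y ⊆ Trans t), RTU Trans pr q t := by
    apply Finset.sum_le_sum
    intro t ht
    simp only [Finset.mem_filter] at ht
    exact utilT_le_RTU Trans pr q Y t ht.2
  have h2 : ∑ t ∈ D.filter (fun t => Y ⊆ Trans t), RTU Trans pr q t ≤ RTWU D Trans pr q {y, z} := by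
    apply Finset.sum_le_sum_of_subset_of_nonneg
    · intro t ht
      simp only [Finset.mem_filter] at *
      exact ⟨ht.1, hYZ.trans ht.2⟩
    · intro t _ _
      exact RTU_nonneg Trans pr q t
  linarith
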